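/- For $n=3$: in $\mathbb{Q}(y_1,y_2,y_3,t)$, summing over all six permutations $w \in S_3$ of the variables, $\sum_{w \in S_3} w\Bigl(\frac{(y_1-ty_2)(y_1-ty_3)(y_2-ty_3)}{(y_1-y_2)(y_1-y_3)(y_2-y_3)}\Bigr) = (1+t)(1+t+t^2)$. -/

import Mathlib

open Finset

private lemma hl_key {K : Type*} [Field K] (a b c t : K)
    (h01 : a - b ≠ 0) (h02 : a - c ≠ 0) (h12 : b - c ≠ 0)
    (h10 : b - a ≠ 0) (h20 : c - a ≠ 0) (h21 : c - b ≠ 0) :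
    (a - t*b)/(a-b) * ((a - t*c)/(a-c)) * ((b - t*c)/(b-c))
  + (b - t*a)/(b-a) * ((b - t*c)/(b-c)) * ((a - t*c)/(a-c))
  + (c - t*b)/(c-b) * ((c - t*a)/(c-a)) * ((b - t*a)/(b-a))
  + (a - t*c)/(a-c) * ((a - t*b)/(a-b)) * ((c - t*b)/(c-b))
  + (b - t*c)/(b-c) * ((b - t*a)/(b-a)) * ((c - t*a)/(c-a))
  + (c - t*a)/(c-a) * ((c - t*b)/(c-b)) * ((a - t*b)/(a-b))
  = (1 + t) * (1 + t + t^2) := by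
  have hD : (a-b) * (a-c) * (b-c) ≠ 0 := mul_ne_zero (mul_ne_zero h01 h02) h12
  have e2 : (b - t*a)/(b-a) * ((b - t*c)/(b-c)) * ((a - t*c)/(a-c))
      = (-((b - t*a) * (b - t*c) * (a - t*c))) / ((a-b) * (a-c) * (b-c)) := by
    rw [div_mul_div_comm, div_mul_div_comm,
      div_eq_div_iff (mul_ne_zero (mul_ne_zero h10 h12) h02) hD]; ring
  have e3 : (c - t*b)/(c-b) * ((c - t*a)/(c-a)) * ((b - t*a)/(b-a))
      = (-((c - t*b) * (c - t*a) * (b - t*a))) / ((a-b) * (a-c) * (b-c)) := by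
    rw [div_mul_div_comm, div_mul_div_comm,
      div_eq_div_iff (mul_ne_zero (mul_ne_zero h21 h20) h10) hD]; ring
  have e4 : (a - t*c)/(a-c) * ((a - t*b)/(a-b)) * ((c - t*b)/(c-b))
      = (-((a - t*c) * (a - t*b) * (c - t*b))) / ((a-b) * (a-c) * (b-c)) := by
    rw [div_mul_div_comm, div_mul_div_comm,
      div_eq_div_iff (mul_ne_zero (mul_ne_zero h02 h01) h21) hD]; ring
  have e5 : (b - t*c)/(b-c) * ((b - t*a)/(b-a)) * ((c - t*a)/(c-a))
      = ((b - t*c) * (b - t*a) * (c - t*a)) / ((a-b) * (a-c) * (b-c)) := by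
    rw [div_mul_div_comm, div_mul_div_comm,
      div_eq_div_iff (mul_ne_zero (mul_ne_zero h12 h10) h20) hD]; ring
  have e6 : (c - t*a)/(c-a) * ((c - t*b)/(c-b)) * ((a - t*b)/(a-b))
      = ((c - t*a) * (c - t*b) * (a - t*b)) / ((a-b) * (a-c) * (b-c)) := by
    rw [div_mul_div_comm, div_mul_div_comm,
      div_eq_div_iff (mul_ne_zero (mul_ne_zero h20 h21) h01) hD]; ring
  rw [div_mul_div_comm, div_mul_div_comm, e2, e3, e4, e5, e6,
    ← add_div, ← add_div, ← add_div, ← add_div,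
    ← add_div, div_eq_iff hD]
  ring


/-- For pairwise distinct indeterminates `y₁, y₂, y₃` (elements of a field) and `t`:
summing over all six permutations of the variables,
`∑_{w ∈ S₃} w((y₁-ty₂)(y₁-ty₃)(y₂-ty₃)/((y₁-y₂)(y₁-y₃)(y₂-y₃))) = (1+t)(1+t+t²)`. -/
theorem hall_littlewood_sym_three {K : Type*} [Field K] (y : Fin 3 → K)
    (hy : Function.Injective y) (t : K) :
    ∑ w : Equiv.Perm (Fin 3), ∏ i, ∏ j ∈ Ioi i,
        ((y (w i) - t * y (w j)) / (y (w i) - y (w j)))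
      = (1 + t) * (1 + t + t ^ 2) := by
  set g : K → K → K := fun a b => (a - t * b) / (a - b) with hg
  have hprod : ∀ w : Equiv.Perm (Fin 3),
      (∏ i, ∏ j ∈ Ioi i, g (y (w i)) (y (w j)))
        = g (y (w 0)) (y (w 1)) * g (y (w 0)) (y (w 2)) * g (y (w 1)) (y (w 2)) := by
    intro w
    rw [Fin.prod_univ_three, show (Ioi (0:Fin 3)) = {1,2} from rfl,
      show (Ioi (1:Fin 3)) = {2} from rfl, show (Ioi (2:Fin 3)) = ∅ from rfl,
      Finset.prod_pair (by decide), Finset.prod_singleton, Finset.prod_empty, mul_one]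
  have huniv : (univ : Finset (Equiv.Perm (Fin 3))) =
      {1, Equiv.swap 0 1, Equiv.swap 0 2, Equiv.swap 1 2,
       Equiv.swap 0 1 * Equiv.swap 1 2, Equiv.swap 1 2 * Equiv.swap 0 1} := by decide
  calc ∑ w : Equiv.Perm (Fin 3), ∏ i, ∏ j ∈ Ioi i, g (y (w i)) (y (w j))
      = ∑ w ∈ ({1, Equiv.swap 0 1, Equiv.swap 0 2, Equiv.swap 1 2,
       Equiv.swap 0 1 * Equiv.swap 1 2, Equiv.swap 1 2 * Equiv.swap 0 1} :
        Finset (Equiv.Perm (Fin 3))),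
        g (y (w 0)) (y (w 1)) * g (y (w 0)) (y (w 2)) * g (y (w 1)) (y (w 2)) := by
        rw [← huniv]; exact Finset.sum_congr rfl fun w _ => hprod w
    _ = g (y 0) (y 1) * g (y 0) (y 2) * g (y 1) (y 2)
        + g (y 1) (y 0) * g (y 1) (y 2) * g (y 0) (y 2)
        + g (y 2) (y 1) * g (y 2) (y 0) * g (y 1) (y 0)
        + g (y 0) (y 2) * g (y 0) (y 1) * g (y 2) (y 1)
        + g (y 1) (y 2) * g (y 1) (y 0) * g (y 2) (y 0)
        + g (y 2) (y 0) * g (y 2) (y 1) * g (y 0) (y 1) := by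
        rw [Finset.sum_insert (by decide), Finset.sum_insert (by decide),
          Finset.sum_insert (by decide), Finset.sum_insert (by decide),
          Finset.sum_insert (by decide), Finset.sum_singleton]
        simp only [Equiv.Perm.one_apply,
  show (Equiv.swap 0 1 : Equiv.Perm (Fin 3)) 0 = 1 from rfl,
  show (Equiv.swap 0 1 : Equiv.Perm (Fin 3)) 1 = 0 from rfl,
  show (Equiv.swap 0 1 : Equiv.Perm (Fin 3)) 2 = 2 from rfl,
  show (Equiv.swap 0 2 : Equiv.Perm (Fin 3)) 0 = 2 from rfl,
  show (Equiv.swap 0 2 : Equiv.Perm (Fin 3)) 1 = 1 from rfl,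
  show (Equiv.swap 0 2 : Equiv.Perm (Fin 3)) 2 = 0 from rfl,
  show (Equiv.swap 1 2 : Equiv.Perm (Fin 3)) 0 = 0 from rfl,
  show (Equiv.swap 1 2 : Equiv.Perm (Fin 3)) 1 = 2 from rfl,
  show (Equiv.swap 1 2 : Equiv.Perm (Fin 3)) 2 = 1 from rfl,
  show ((Equiv.swap 0 1 * Equiv.swap 1 2) : Equiv.Perm (Fin 3)) 0 = 1 from rfl,
  show ((Equiv.swap 0 1 * Equiv.swap 1 2) : Equiv.Perm (Fin 3)) 1 = 2 from rfl,
  show ((Equiv.swap 0 1 * Equiv.swap 1 2) : Equiv.Perm (Fin 3)) 2 = 0 from rfl,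
  show ((Equiv.swap 1 2 * Equiv.swap 0 1) : Equiv.Perm (Fin 3)) 0 = 2 from rfl,
  show ((Equiv.swap 1 2 * Equiv.swap 0 1) : Equiv.Perm (Fin 3)) 1 = 0 from rfl,
  show ((Equiv.swap 1 2 * Equiv.swap 0 1) : Equiv.Perm (Fin 3)) 2 = 1 from rfl]
        ring
    _ = (1 + t) * (1 + t + t ^ 2) := by
        have h01 : y 0 - y 1 ≠ 0 := sub_ne_zero.2 (fun h => by simpa using hy h)
        have h02 : y 0 - y 2 ≠ 0 := sub_ne_zero.2 (fun h => by simpa using hy h)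
        have h12 : y 1 - y 2 ≠ 0 := sub_ne_zero.2 (fun h => by simpa using hy h)
        have h10 : y 1 - y 0 ≠ 0 := sub_ne_zero.2 (fun h => by simpa using hy h)
        have h20 : y 2 - y 0 ≠ 0 := sub_ne_zero.2 (fun h => by simpa using hy h)
        have h21 : y 2 - y 1 ≠ 0 := sub_ne_zero.2 (fun h => by simpa using hy h)
        simp only [hg]
        exact hl_key (y 0) (y 1) (y 2) t h01 h02 h12 h10 h20 h21
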